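/- The homomorphism ι : F → E is injective; equivalently, the (d−1)(n−1) elements p_k·e_{k,j}·e_{k,j+1}^{−1}·p_k^{−1} of E (for k = 1,…,n−1 and j = 1,…,d−1) freely generate a free subgroup of E of rank (d−1)(n−1). -/

import Mathlib

/-- The free group `E` on the generators `e_{k,j}`, `k = 0,1,…,n`, `j ∈ ℤ/dℤ`,
of the covering groupoid of the `d`-fold branched cover over a disk with `n`
branch points. -/
abbrev Egrp (n d : ℕ) : Type := FreeGroup (Fin (n + 1) × ZMod d)

/-- The generator `e_{k,j}` of `E` (first index read as a natural number). -/
def eGen (n d : ℕ) (k : ℕ) (j : ZMod d) : Egrp n d :=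
  FreeGroup.of ((Fin.ofNat (n + 1) k), j)

/-- The lift `β̃_i` of the half Dehn twist `β_i`, as an endomorphism of the
free group `E`, defined on generators by
`e_{i−1,j} ↦ e_{i−1,j}·e_{i,j+1}`, `e_{i,j} ↦ e_{i,j+1}⁻¹`,
`e_{i+1,j} ↦ e_{i,j}·e_{i+1,j}`, and fixing all other generators. -/
def betaTilde (n d : ℕ) (i : ℕ) : Egrp n d →* Egrp n d :=
  FreeGroup.lift fun p =>
    if (p.1 : ℕ) + 1 = i then
      FreeGroup.of p * eGen n d i (p.2 + 1)
    else if (p.1 : ℕ) = i then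
      (FreeGroup.of (p.1, p.2 + 1))⁻¹
    else if (p.1 : ℕ) = i + 1 then
      eGen n d i p.2 * FreeGroup.of p
    else
      FreeGroup.of p


/-- The free group `F` on the `(d−1)(n−1)` generators `x_{i,j}`,
`i = 1,…,n−1`, `j = 1,…,d−1`. -/
abbrev Fgrp (n d : ℕ) : Type := FreeGroup (Fin (n - 1) × Fin (d - 1))

/-- The element `x_{k,j}` of `F`, with the second index read modulo `d`:
for `j ≡ 1,…,d−1 (mod d)` it is the corresponding generator, and for
`j ≡ 0 (mod d)` (i.e. `j = d`) it is `x_{k,d} := (x_{k,1}·x_{k,2}·…·x_{k,d−1})⁻¹`.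
(Junk value `1` outside the valid index ranges.) -/
def X (n d k j : ℕ) : Fgrp n d :=
  if hk : k - 1 < n - 1 then
    if j % d = 0 then
      ((List.ofFn fun b : Fin (d - 1) =>
        FreeGroup.of ((⟨k - 1, hk⟩ : Fin (n - 1)), b)).prod)⁻¹
    else if hj : j % d - 1 < d - 1 then
      FreeGroup.of ((⟨k - 1, hk⟩ : Fin (n - 1)), (⟨j % d - 1, hj⟩ : Fin (d - 1)))
    else 1
  else 1

/-- The element `y_{k,j} := x_{k,1}·x_{k,2}·…·x_{k,j−1}` of `F`. -/
def Y (n d k j : ℕ) : Fgrp n d :=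
  ((List.range (j - 1)).map fun t => X n d k (t + 1)).prod

/-- The endomorphism `T_i` of the free group `F`, defined on the generators
(with `1 ≤ k ≤ n−1`, `1 ≤ j ≤ d−1`) by
`x_{i−1,j} ↦ x_{i−1,j−1}⁻¹·…·x_{i−1,1}⁻¹·x_{i,j+1}·x_{i−1,1}·…·x_{i−1,j}`,
`x_{i,j} ↦ x_{i,2}·…·x_{i,j}·x_{i,j+1}⁻¹·x_{i,j}⁻¹·…·x_{i,2}⁻¹`,
`x_{i+1,j} ↦ x_{i,j−1}⁻¹·…·x_{i,1}⁻¹·x_{i+1,j}·x_{i,1}·…·x_{i,j}`,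
fixing all other generators. -/
def T (n d : ℕ) (i : ℕ) : Fgrp n d →* Fgrp n d :=
  FreeGroup.lift fun p =>
    let k := (p.1 : ℕ) + 1
    let j := (p.2 : ℕ) + 1
    if k + 1 = i then
      (Y n d k j)⁻¹ * X n d i (j + 1) * Y n d k (j + 1)
    else if k = i then
      (((List.range (j - 1)).map fun t => X n d i (t + 2)).prod) *
        (X n d i (j + 1))⁻¹ *
        (((List.range (j - 1)).map fun t => X n d i (t + 2)).prod)⁻¹
    else if k = i + 1 then
      (Y n d i j)⁻¹ * X n d k j * Y n d i (j + 1)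
    else
      FreeGroup.of p

/-- The path `p_k := e_{0,1}·e_{1,1}·…·e_{k−1,1}` in `E`. -/
def pathP (n d k : ℕ) : Egrp n d :=
  ((List.range k).map fun t => FreeGroup.of ((Fin.ofNat (n + 1) (t : ℕ)), (1 : ZMod d))).prod

/-- The homomorphism `ι : F → E` determined on generators by
`ι(x_{k,j}) = p_k·e_{k,j}·e_{k,j+1}⁻¹·p_k⁻¹`. -/
def iota (n d : ℕ) : Fgrp n d →* Egrp n d :=
  FreeGroup.lift fun p =>
    let k := (p.1 : ℕ) + 1
    let j := (p.2 : ℕ) + 1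
    pathP n d k * eGen n d k (j : ZMod d) * (eGen n d k ((j : ZMod d) + 1))⁻¹ *
      (pathP n d k)⁻¹


/-- Retraction `π : E → F`: sends `e_{k,j}` (for `1 ≤ k`) to
`(x_{k,1}·…·x_{k,j'-1})⁻¹` where `j'` is the representative of `j` in `{1,…,d}`,
and `e_{0,j}` to `1`. -/
def piHom (n d : ℕ) : Egrp n d →* Fgrp n d :=
  FreeGroup.lift fun q =>
    if (q.1 : ℕ) = 0 then 1
    else (Y n d (q.1 : ℕ) (if (q.2).val = 0 then d else (q.2).val))⁻¹

lemma Y_one (n d k : ℕ) : Y n d k 1 = 1 := by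
  simp [Y]

lemma Y_succ (n d k j : ℕ) (hj : 1 ≤ j) :
    Y n d k (j + 1) = Y n d k j * X n d k j := by
  obtain ⟨m, rfl⟩ : ∃ m, j = m + 1 := ⟨j - 1, by omega⟩
  simp [Y, List.range_succ]

lemma piHom_pathP (n d k : ℕ) (hd : 2 ≤ d) : piHom n d (pathP n d k) = 1 := by
  haveI : NeZero d := ⟨by omega⟩
  rw [pathP, map_list_prod]
  apply List.prod_eq_one
  intro x hx
  simp only [List.map_map, List.mem_map, Function.comp] at hx
  obtain ⟨t, _, rfl⟩ := hx
  rw [piHom, FreeGroup.lift_apply_of]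
  haveI : Fact (1 < d) := ⟨by omega⟩
  have h1 : (1 : ZMod d).val = 1 := ZMod.val_one d
  split
  · rfl
  · rw [h1]
    simp [Y_one]

/-- The homomorphism `ι : F → E` is injective; equivalently, the `(d−1)(n−1)`
elements `p_k·e_{k,j}·e_{k,j+1}⁻¹·p_k⁻¹` of `E` (for `k = 1,…,n−1` and
`j = 1,…,d−1`) freely generate a free subgroup of `E` of rank `(d−1)(n−1)`. -/
theorem iota_injective (n d : ℕ) (hn : 2 ≤ n) (hd : 2 ≤ d) :
    Function.Injective (iota n d) := by
  haveI : NeZero d := ⟨by omega⟩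
  have key : (piHom n d).comp (iota n d) = MonoidHom.id _ := by
    apply FreeGroup.ext_hom
    rintro ⟨i, b⟩
    have hi : (i : ℕ) < n - 1 := i.isLt
    have hb : (b : ℕ) < d - 1 := b.isLt
    set k : ℕ := (i : ℕ) + 1 with hk
    set j : ℕ := (b : ℕ) + 1 with hjdef
    have hkn : k < n + 1 := by omega
    have hjd : j < d := by omega
    simp only [MonoidHom.comp_apply, MonoidHom.id_apply, iota, FreeGroup.lift_apply_of]
    rw [map_mul, map_mul, map_mul, map_inv, map_inv, piHom_pathP n d k hd,
      one_mul, inv_one, mul_one]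
    have hvalj : ((j : ZMod d)).val = j := ZMod.val_natCast_of_lt hjd
    have hvalj1 : ((j : ZMod d) + 1).val = (j + 1) % d := by
      have : ((j : ZMod d) + 1) = ((j + 1 : ℕ) : ZMod d) := by push_cast; ring
      rw [this, ZMod.val_natCast]
    have hcast : ((Fin.ofNat (n + 1) k : Fin (n + 1)) : ℕ) = k := by
      simp [Fin.val_ofNat, Nat.mod_eq_of_lt hkn]
    have e1 : piHom n d (eGen n d k (j : ZMod d)) = (Y n d k j)⁻¹ := by
      rw [eGen, piHom, FreeGroup.lift_apply_of, hcast]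
      rw [if_neg (by omega : ¬ k = 0)]
      rw [hvalj, if_neg (by omega : ¬ j = 0)]
    have e2 : piHom n d (eGen n d k ((j : ZMod d) + 1)) = (Y n d k (j + 1))⁻¹ := by
      rw [eGen, piHom, FreeGroup.lift_apply_of, hcast]
      rw [if_neg (by omega : ¬ k = 0)]
      rw [hvalj1]
      by_cases hjd1 : j + 1 = d
      · rw [if_pos (show (j + 1) % d = 0 by rw [hjd1, Nat.mod_self]), hjd1]
      · rw [if_neg (by rw [Nat.mod_eq_of_lt (by omega)]; omega),
          Nat.mod_eq_of_lt (by omega)]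
    rw [e1, e2, inv_inv, Y_succ n d k j (by omega), ← mul_assoc, inv_mul_cancel,
      one_mul]
    rw [X, dif_pos (by omega : k - 1 < n - 1),
      if_neg (by rw [Nat.mod_eq_of_lt hjd]; omega)]
    rw [dif_pos (by rw [Nat.mod_eq_of_lt hjd]; omega)]
    congr 1
    ext
    · simp; omega
    · simp [Nat.mod_eq_of_lt hjd]; omega
  intro x y hxy
  have := congrArg (piHom n d) hxy
  have h1 := DFunLike.congr_fun key x
  have h2 := DFunLike.congr_fun key y
  simp only [MonoidHom.comp_apply, MonoidHom.id_apply] at h1 h2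
  rw [← h1, ← h2, this]
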